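/- arXiv:math/0507198 — 3 statements merged into one kernel-verified Lean document; each statement's English description precedes it below -/
import Mathlib

section
/- Let g be a finite-dimensional complex Lie superalgebra with an even, invariant, non-degenerate supersymmetric bilinear form (·,·), and let x ∈ g₁ satisfy [x,x] = 0. Then the superdimension of [x, g] = {[x,y] : y ∈ g} is zero, i.e. dim [x,g]₀ = dim [x,g]₁. -/
/-- Let `g = g0 ⊕ g1` be a finite-dimensional complex Lie superalgebra with an
even, invariant, non-degenerate supersymmetric bilinear form (given componentwise by a
symmetric non-degenerate form `B0` on `g0` and a skew-symmetric non-degenerate form `B1`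
on `g1`), brackets `b11 : g1 × g1 → g0` (symmetric) and `b01 : g0 × g1 → g1`, and
invariance `([y,z],a) = (y,[z,a])`. If `x ∈ g1` satisfies `[x,x] = 0`, then
`sdim [x,g] = 0`, i.e. `dim [x,g]₀ = dim [x,g]₁`, where `[x,g]₀ = [x,g1] = range (b11 x)`
and `[x,g]₁ = [x,g0] = range (a ↦ [a,x])`. -/
theorem sdim_bracket_with_x_eq_zero
    (g0 g1 : Type*) [AddCommGroup g0] [Module ℂ g0] [AddCommGroup g1] [Module ℂ g1]
    [FiniteDimensional ℂ g0] [FiniteDimensional ℂ g1]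
    (b11 : g1 →ₗ[ℂ] g1 →ₗ[ℂ] g0)    -- the bracket g1 × g1 → g0
    (b01 : g0 →ₗ[ℂ] g1 →ₗ[ℂ] g1)    -- the bracket g0 × g1 → g1
    (B0 : LinearMap.BilinForm ℂ g0) (B1 : LinearMap.BilinForm ℂ g1)
    (hB0symm : ∀ a b : g0, B0 a b = B0 b a)
    (hB1skew : ∀ y z : g1, B1 y z = - B1 z y)
    (hB0 : B0.Nondegenerate) (hB1 : B1.Nondegenerate)
    (hb11symm : ∀ y z : g1, b11 y z = b11 z y)
    (hinv1 : ∀ (y z : g1) (a : g0), B0 (b11 y z) a = - B1 y (b01 a z))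
    (hinv2 : ∀ (a : g0) (y z : g1), B1 (b01 a y) z = B0 a (b11 y z))
    (x : g1) (hxx : b11 x x = 0) :
    Module.finrank ℂ (LinearMap.range (b11 x)) =
      Module.finrank ℂ (LinearMap.range (b01.flip x)) := by
  have hB0refl : B0.IsRefl := fun a b h => by rw [hB0symm]; exact h
  -- orthogonal of range (b11 x) w.r.t. B0 equals ker (b01.flip x)
  have hkey : B0.orthogonal (LinearMap.range (b11 x)) = LinearMap.ker (b01.flip x) := by
    ext a
    rw [LinearMap.BilinForm.mem_orthogonal_iff, LinearMap.mem_ker]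
    constructor
    · intro h
      apply hB1.1
      intro z
      have := h (b11 x z) ⟨z, rfl⟩
      rw [hB0symm, ← hinv2] at this
      simpa using this
    · rintro h w ⟨z, rfl⟩
      rw [hB0symm, ← hinv2]
      simp [LinearMap.flip_apply] at h ⊢
      rw [h]; simp
  have h1 := LinearMap.BilinForm.finrank_orthogonal hB0
      (LinearMap.range (b11 x))
  rw [hkey] at h1
  have h2 := LinearMap.finrank_range_add_finrank_ker (b01.flip x)
  have h3 : Module.finrank ℂ (LinearMap.range (b11 x)) ≤ Module.finrank ℂ g0 :=
    Submodule.finrank_le _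
  omega
end

section
/- Let g = gl(m|n) with m ≠ n (or sl(m|n)), with the natural ℤ-grading g = g(-1) ⊕ g(0) ⊕ g(1) where g(1) consists of block-upper-triangular odd matrices (m×n blocks) and g(-1) of block-lower-triangular odd matrices. Identify an odd element x ∈ g₁ with a pair (x⁺, x⁻) where x⁺ : ℂⁿ → ℂᵐ and x⁻ : ℂᵐ → ℂⁿ. Then [x,x] = 0 if and only if x⁺x⁻ = 0 and x⁻x⁺ = 0. Moreover, two such self-commuting elements x, y lie in the same orbit of G₀ = GL(m) × GL(n) (acting by conjugation) if and only if rank(x⁺) = rank(y⁺) and rank(x⁻) = rank(y⁻). -/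
open Matrix Submodule Module

section Aux

variable {K : Type*} [Field K] {V W : Type*} [AddCommGroup V] [Module K V]
  [AddCommGroup W] [Module K W] [FiniteDimensional K V] [FiniteDimensional K W]

/-- A complement of `R` inside `T` (where `R ≤ T`). -/
lemma aux_exists_compl_le (R T : Submodule K V) (h : R ≤ T) :
    ∃ B : Submodule K V, B ≤ T ∧ Disjoint B R ∧ B ⊔ R = T := by
  obtain ⟨C, hC⟩ := Submodule.exists_isCompl R
  refine ⟨C ⊓ T, inf_le_right, hC.disjoint.symm.mono_left inf_le_left, ?_⟩
  rw [sup_comm, ← sup_inf_assoc_of_le _ h, hC.sup_eq_top, top_inf_eq]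

/-- Span of a coerced basis of a submodule. -/
lemma aux_span_coe {p : Submodule K V} {ι : Type*} (b : Basis ι K p) :
    Submodule.span K (Set.range fun i => (b i : V)) = p := by
  have : (Set.range fun i => (b i : V)) = p.subtype '' (Set.range b) := by
    ext x; simp [Set.range_comp]
  rw [this, ← Submodule.map_span, b.span_eq, Submodule.map_top, Submodule.range_subtype]

/-- Adapted bases for a pair of linear maps `f, g` with `f∘g = 0`, `g∘f = 0`. -/
lemma aux_adapted_bases (f : V →ₗ[K] W) (g : W →ₗ[K] V)
    (hfg : ∀ w, f (g w) = 0) (hgf : ∀ v, g (f v) = 0)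
    {r s : ℕ} (hr : finrank K (LinearMap.range f) = r)
    (hs : finrank K (LinearMap.range g) = s) :
    ∃ (b c : ℕ), r + (b + s) = finrank K V ∧ r + (c + s) = finrank K W ∧
    ∃ (v : Basis (Fin r ⊕ (Fin b ⊕ Fin s)) K V) (w : Basis (Fin r ⊕ (Fin c ⊕ Fin s)) K W),
      (∀ i, f (v (Sum.inl i)) = w (Sum.inl i)) ∧
      (∀ j, f (v (Sum.inr j)) = 0) ∧
      (∀ i, g (w (Sum.inl i)) = 0) ∧
      (∀ j, g (w (Sum.inr (Sum.inl j))) = 0) ∧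
      (∀ k, g (w (Sum.inr (Sum.inr k))) = v (Sum.inr (Sum.inr k))) := by
  classical
  -- range inclusions
  have hRgKf : LinearMap.range g ≤ LinearMap.ker f := by
    rintro x ⟨y, rfl⟩; exact hfg y
  have hRfKg : LinearMap.range f ≤ LinearMap.ker g := by
    rintro x ⟨y, rfl⟩; exact hgf y
  -- complements
  obtain ⟨A, hA⟩ := Submodule.exists_isCompl (LinearMap.ker f)
  obtain ⟨B, hBle, hBdisj, hBsup⟩ := aux_exists_compl_le (LinearMap.range g) (LinearMap.ker f) hRgKf
  obtain ⟨E, hE⟩ := Submodule.exists_isCompl (LinearMap.ker g)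
  obtain ⟨C, hCle, hCdisj, hCsup⟩ := aux_exists_compl_le (LinearMap.range f) (LinearMap.ker g) hRfKg
  -- dimensions
  have hdimV : finrank K (LinearMap.range f) + finrank K (LinearMap.ker f) = finrank K V :=
    LinearMap.finrank_range_add_finrank_ker f
  have hdimW : finrank K (LinearMap.range g) + finrank K (LinearMap.ker g) = finrank K W :=
    LinearMap.finrank_range_add_finrank_ker g
  have hAcompl : finrank K (LinearMap.ker f) + finrank K A = finrank K V :=
    Submodule.finrank_add_eq_of_isCompl hA
  have hEcompl : finrank K (LinearMap.ker g) + finrank K E = finrank K W :=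
    Submodule.finrank_add_eq_of_isCompl hE
  have hBsum : finrank K B + finrank K (LinearMap.range g) = finrank K (LinearMap.ker f) := by
    have := Submodule.finrank_sup_add_finrank_inf_eq B (LinearMap.range g)
    rw [hBsup, hBdisj.eq_bot, finrank_bot, add_zero] at this
    omega
  have hCsum : finrank K C + finrank K (LinearMap.range f) = finrank K (LinearMap.ker g) := by
    have := Submodule.finrank_sup_add_finrank_inf_eq C (LinearMap.range f)
    rw [hCsup, hCdisj.eq_bot, finrank_bot, add_zero] at this
    omega
  have hdimA : finrank K A = r := by omega
  have hdimE : finrank K E = s := by omega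
  -- bases of the pieces
  let bA : Basis (Fin r) K A := finBasisOfFinrankEq K A hdimA
  let bB : Basis (Fin (finrank K B)) K B := finBasis K B
  let bC : Basis (Fin (finrank K C)) K C := finBasis K C
  let bE : Basis (Fin s) K E := finBasisOfFinrankEq K E hdimE
  -- the families
  set v1 : Fin r → V := fun i => (bA i : V) with hv1
  set v2 : Fin (finrank K B) → V := fun j => (bB j : V) with hv2
  set v3 : Fin s → V := fun k => g (bE k) with hv3
  set w1 : Fin r → W := fun i => f (bA i) with hw1
  set w2 : Fin (finrank K C) → W := fun j => (bC j : W) with hw2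
  set w3 : Fin s → W := fun k => (bE k : W) with hw3
  -- independence and spans
  have hv1i : LinearIndependent K v1 := bA.linearIndependent.map' A.subtype (ker_subtype A)
  have hv2i : LinearIndependent K v2 := bB.linearIndependent.map' B.subtype (ker_subtype B)
  have hw2i : LinearIndependent K w2 := bC.linearIndependent.map' C.subtype (ker_subtype C)
  have hw3i : LinearIndependent K w3 := bE.linearIndependent.map' E.subtype (ker_subtype E)
  have hv1s : Submodule.span K (Set.range v1) = A := aux_span_coe bA
  have hv2s : Submodule.span K (Set.range v2) = B := aux_span_coe bB
  have hw2s : Submodule.span K (Set.range w2) = C := aux_span_coe bC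
  have hw3s : Submodule.span K (Set.range w3) = E := aux_span_coe bE
  have hv3i : LinearIndependent K v3 := by
    have := hw3i.map (f := g) (by rw [hw3s]; exact hE.symm.disjoint)
    exact this
  have hv3s : Submodule.span K (Set.range v3) = LinearMap.range g := by
    have : Set.range v3 = g '' (Set.range w3) := by
      ext x; simp [hv3, hw3, Set.range_comp]
    rw [this, ← Submodule.map_span, hw3s]
    have h1 : LinearMap.range g = Submodule.map g ⊤ := (Submodule.map_top g).symm
    rw [h1, ← hE.sup_eq_top, Submodule.map_sup]
    have h2 : Submodule.map g (LinearMap.ker g) = ⊥ := by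
      apply le_antisymm _ bot_le
      rintro x ⟨y, hy, rfl⟩; exact hy
    rw [h2, bot_sup_eq]
  have hw1i : LinearIndependent K w1 := by
    have := hv1i.map (f := f) (by rw [hv1s]; exact hA.symm.disjoint)
    exact this
  have hw1s : Submodule.span K (Set.range w1) = LinearMap.range f := by
    have : Set.range w1 = f '' (Set.range v1) := by
      ext x; simp [hw1, hv1, Set.range_comp]
    rw [this, ← Submodule.map_span, hv1s]
    have h1 : LinearMap.range f = Submodule.map f ⊤ := (Submodule.map_top f).symm
    rw [h1, ← hA.sup_eq_top, Submodule.map_sup]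
    have h2 : Submodule.map f (LinearMap.ker f) = ⊥ := by
      apply le_antisymm _ bot_le
      rintro x ⟨y, hy, rfl⟩; exact hy
    rw [h2, bot_sup_eq]
  -- assemble basis of V
  have hv23i : LinearIndependent K (Sum.elim v2 v3) := by
    refine hv2i.sum_type hv3i ?_
    rw [hv2s, hv3s]; exact hBdisj
  have hv23s : Submodule.span K (Set.range (Sum.elim v2 v3)) = LinearMap.ker f := by
    rw [Set.Sum.elim_range, Submodule.span_union, hv2s, hv3s, hBsup]
  have hvI : LinearIndependent K (Sum.elim v1 (Sum.elim v2 v3)) := by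
    refine hv1i.sum_type hv23i ?_
    rw [hv1s, hv23s]; exact hA.symm.disjoint
  have hvS : Submodule.span K (Set.range (Sum.elim v1 (Sum.elim v2 v3))) = ⊤ := by
    rw [Set.Sum.elim_range, Submodule.span_union, hv1s, hv23s, sup_comm, hA.sup_eq_top]
  let v : Basis (Fin r ⊕ (Fin (finrank K B) ⊕ Fin s)) K V := Basis.mk hvI (by rw [hvS])
  -- assemble basis of W
  have hw23i : LinearIndependent K (Sum.elim w2 w3) := by
    refine hw2i.sum_type hw3i ?_
    rw [hw2s, hw3s]
    exact hE.disjoint.mono_left hCle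
  have hw23s : Submodule.span K (Set.range (Sum.elim w2 w3)) = C ⊔ E := by
    rw [Set.Sum.elim_range, Submodule.span_union, hw2s, hw3s]
  have hdisjW : Disjoint (LinearMap.range f) (C ⊔ E) := by
    rw [disjoint_iff]
    apply le_antisymm _ bot_le
    intro x hx
    obtain ⟨hx1, hx2⟩ := Submodule.mem_inf.mp hx
    obtain ⟨c, hc, e, he, rfl⟩ := Submodule.mem_sup.mp hx2
    have hce : c + e ∈ LinearMap.ker g := hRfKg hx1
    have hck : c ∈ LinearMap.ker g := hCle hc
    have hek : e ∈ LinearMap.ker g := by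
      have h3 : e = (c + e) - c := by abel
      rw [h3]; exact Submodule.sub_mem _ hce hck
    have he0 : e = 0 := by
      have := hE.disjoint.le_bot (Submodule.mem_inf.mpr ⟨hek, he⟩)
      simpa using this
    subst he0
    rw [add_zero] at hx1 ⊢
    have := hCdisj.le_bot (Submodule.mem_inf.mpr ⟨hc, hx1⟩)
    simpa using this
  have hwI : LinearIndependent K (Sum.elim w1 (Sum.elim w2 w3)) := by
    refine hw1i.sum_type hw23i ?_
    rw [hw1s, hw23s]
    exact hdisjW
  have hwS : Submodule.span K (Set.range (Sum.elim w1 (Sum.elim w2 w3))) = ⊤ := by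
    rw [Set.Sum.elim_range, Submodule.span_union, hw1s, hw23s, ← sup_assoc,
      sup_comm (LinearMap.range f) C, hCsup, hE.sup_eq_top]
  let w : Basis (Fin r ⊕ (Fin (finrank K C) ⊕ Fin s)) K W := Basis.mk hwI (by rw [hwS])
  refine ⟨finrank K B, finrank K C, by omega, by omega, v, w, ?_, ?_, ?_, ?_, ?_⟩
  · intro i
    simp only [v, w, Basis.mk_apply, Sum.elim_inl]
    rfl
  · rintro (j | k)
    · have : (bB j : V) ∈ LinearMap.ker f := hBle (bB j).2
      simpa [v, Basis.mk_apply] using this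
    · simp only [v, Basis.mk_apply, Sum.elim_inr, hv3]
      exact hfg _
  · intro i
    simp only [w, Basis.mk_apply, Sum.elim_inl, hw1]
    exact hgf _
  · intro j
    have : (bC j : W) ∈ LinearMap.ker g := hCle (bC j).2
    simpa [w, Basis.mk_apply] using this
  · intro k
    simp only [v, w, Basis.mk_apply, Sum.elim_inr]
    rfl

/-- Two pairs of linear maps with vanishing compositions and equal ranks are conjugate. -/
lemma aux_equiv_of_rank_eq (f f' : V →ₗ[K] W) (g g' : W →ₗ[K] V)
    (hfg : ∀ w, f (g w) = 0) (hgf : ∀ v, g (f v) = 0)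
    (hfg' : ∀ w, f' (g' w) = 0) (hgf' : ∀ v, g' (f' v) = 0)
    (hrf : finrank K (LinearMap.range f) = finrank K (LinearMap.range f'))
    (hrg : finrank K (LinearMap.range g) = finrank K (LinearMap.range g')) :
    ∃ (P : V ≃ₗ[K] V) (Q : W ≃ₗ[K] W),
      (∀ x, f' (P x) = Q (f x)) ∧ (∀ y, g' (Q y) = P (g y)) := by
  obtain ⟨b, c, hb, hc, v, w, h1, h2, h3, h4, h5⟩ :=
    aux_adapted_bases f g hfg hgf rfl rfl
  obtain ⟨b', c', hb', hc', v', w', h1', h2', h3', h4', h5'⟩ :=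
    aux_adapted_bases f' g' hfg' hgf' hrf.symm hrg.symm
  obtain rfl : b = b' := by omega
  obtain rfl : c = c' := by omega
  refine ⟨v.equiv v' (Equiv.refl _), w.equiv w' (Equiv.refl _), ?_, ?_⟩
  · have : f' ∘ₗ (v.equiv v' (Equiv.refl _) : V →ₗ[K] V) =
        (w.equiv w' (Equiv.refl _) : W →ₗ[K] W) ∘ₗ f := by
      apply v.ext
      rintro (i | j)
      · simp only [LinearMap.comp_apply, LinearEquiv.coe_coe, Basis.equiv_apply, Equiv.refl_apply]
        rw [h1', h1 i, Basis.equiv_apply]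
        rfl
      · simp only [LinearMap.comp_apply, LinearEquiv.coe_coe, Basis.equiv_apply, Equiv.refl_apply]
        rw [h2', h2 j, map_zero]
    intro x
    exact DFunLike.congr_fun this x
  · have : g' ∘ₗ (w.equiv w' (Equiv.refl _) : W →ₗ[K] W) =
        (v.equiv v' (Equiv.refl _) : V →ₗ[K] V) ∘ₗ g := by
      apply w.ext
      rintro (i | j | k)
      · simp only [LinearMap.comp_apply, LinearEquiv.coe_coe, Basis.equiv_apply, Equiv.refl_apply]
        rw [h3', h3 i, map_zero]
      · simp only [LinearMap.comp_apply, LinearEquiv.coe_coe, Basis.equiv_apply, Equiv.refl_apply]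
        rw [h4', h4 j, map_zero]
      · simp only [LinearMap.comp_apply, LinearEquiv.coe_coe, Basis.equiv_apply, Equiv.refl_apply]
        rw [h5', h5 k, Basis.equiv_apply]
        rfl
    intro y
    exact DFunLike.congr_fun this y

end Aux

/-- In `gl(m|n)`, identify an odd element `x` with the block matrix
`[[0, x⁺],[x⁻, 0]]` where `x⁺ : ℂⁿ → ℂᵐ` and `x⁻ : ℂᵐ → ℂⁿ`.  Then `[x,x] = 0`
(the anticommutator `x·x + x·x` vanishes) iff `x⁺x⁻ = 0` and `x⁻x⁺ = 0`; and two
self-commuting odd elements `x`, `y` lie in the same orbit of `G₀ = GL(m) × GL(n)`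
(acting by `(g,h)·(x⁺,x⁻) = (g x⁺ h⁻¹, h x⁻ g⁻¹)`) iff `rank x⁺ = rank y⁺` and
`rank x⁻ = rank y⁻`. -/
theorem gl_mn_selfcommuting_and_orbits (m n : ℕ)
    (xp yp : Matrix (Fin m) (Fin n) ℂ) (xm ym : Matrix (Fin n) (Fin m) ℂ) :
    ((Matrix.fromBlocks (0 : Matrix (Fin m) (Fin m) ℂ) xp xm 0) *
        (Matrix.fromBlocks (0 : Matrix (Fin m) (Fin m) ℂ) xp xm 0) +
      (Matrix.fromBlocks (0 : Matrix (Fin m) (Fin m) ℂ) xp xm 0) *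
        (Matrix.fromBlocks (0 : Matrix (Fin m) (Fin m) ℂ) xp xm 0) = 0 ↔
      xp * xm = 0 ∧ xm * xp = 0) ∧
    ((xp * xm = 0 ∧ xm * xp = 0) → (yp * ym = 0 ∧ ym * yp = 0) →
      ((∃ (g : (Matrix (Fin m) (Fin m) ℂ)ˣ) (h : (Matrix (Fin n) (Fin n) ℂ)ˣ),
          yp = (g : Matrix (Fin m) (Fin m) ℂ) * xp * ((h⁻¹ : _) : Matrix (Fin n) (Fin n) ℂ) ∧
          ym = (h : Matrix (Fin n) (Fin n) ℂ) * xm * ((g⁻¹ : _) : Matrix (Fin m) (Fin m) ℂ)) ↔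
        (xp.rank = yp.rank ∧ xm.rank = ym.rank))) := by
  constructor
  · -- anticommutator
    rw [Matrix.fromBlocks_multiply]
    simp only [Matrix.zero_mul, Matrix.mul_zero, add_zero, zero_add]
    rw [Matrix.fromBlocks_add, ← Matrix.fromBlocks_zero]
    simp only [add_zero]
    rw [Matrix.fromBlocks_inj]
    constructor
    · rintro ⟨e1, -, -, e2⟩
      constructor
      · have : (2 : ℂ) • (xp * xm) = 0 := by rw [two_smul]; exact e1
        simpa using this
      · have : (2 : ℂ) • (xm * xp) = 0 := by rw [two_smul]; exact e2
        simpa using this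
    · rintro ⟨e1, e2⟩
      exact ⟨by rw [e1, add_zero], rfl, rfl, by rw [e2, add_zero]⟩
  · -- orbits
    rintro ⟨hx1, hx2⟩ ⟨hy1, hy2⟩
    constructor
    · rintro ⟨g, h, rfl, rfl⟩
      have hdg : IsUnit ((g : Matrix (Fin m) (Fin m) ℂ)).det :=
        Matrix.isUnit_det_of_left_inverse (B := ((g⁻¹ : _) : Matrix (Fin m) (Fin m) ℂ))
          (by rw [← Units.val_mul, inv_mul_cancel g, Units.val_one])
      have hdginv : IsUnit (((g⁻¹ : _) : Matrix (Fin m) (Fin m) ℂ)).det :=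
        Matrix.isUnit_det_of_left_inverse (B := (g : Matrix (Fin m) (Fin m) ℂ))
          (by rw [← Units.val_mul, mul_inv_cancel g, Units.val_one])
      have hdh : IsUnit ((h : Matrix (Fin n) (Fin n) ℂ)).det :=
        Matrix.isUnit_det_of_left_inverse (B := ((h⁻¹ : _) : Matrix (Fin n) (Fin n) ℂ))
          (by rw [← Units.val_mul, inv_mul_cancel h, Units.val_one])
      have hdhinv : IsUnit (((h⁻¹ : _) : Matrix (Fin n) (Fin n) ℂ)).det :=
        Matrix.isUnit_det_of_left_inverse (B := (h : Matrix (Fin n) (Fin n) ℂ))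
          (by rw [← Units.val_mul, mul_inv_cancel h, Units.val_one])
      constructor
      · rw [Matrix.rank_mul_eq_left_of_isUnit_det _ _ hdhinv,
          Matrix.rank_mul_eq_right_of_isUnit_det _ _ hdg]
      · rw [Matrix.rank_mul_eq_left_of_isUnit_det _ _ hdginv,
          Matrix.rank_mul_eq_right_of_isUnit_det _ _ hdh]
    · rintro ⟨hrp, hrm⟩
      -- pass to linear maps
      have hfg : ∀ u, xp.mulVecLin (xm.mulVecLin u) = 0 := by
        intro u
        have : (xp * xm).mulVecLin u = 0 := by rw [hx1]; simp
        simpa [Matrix.mulVecLin_mul] using this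
      have hgf : ∀ u, xm.mulVecLin (xp.mulVecLin u) = 0 := by
        intro u
        have : (xm * xp).mulVecLin u = 0 := by rw [hx2]; simp
        simpa [Matrix.mulVecLin_mul] using this
      have hfg' : ∀ u, yp.mulVecLin (ym.mulVecLin u) = 0 := by
        intro u
        have : (yp * ym).mulVecLin u = 0 := by rw [hy1]; simp
        simpa [Matrix.mulVecLin_mul] using this
      have hgf' : ∀ u, ym.mulVecLin (yp.mulVecLin u) = 0 := by
        intro u
        have : (ym * yp).mulVecLin u = 0 := by rw [hy2]; simp
        simpa [Matrix.mulVecLin_mul] using this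
      obtain ⟨P, Q, hP, hQ⟩ := aux_equiv_of_rank_eq xp.mulVecLin yp.mulVecLin
        xm.mulVecLin ym.mulVecLin hfg hgf hfg' hgf' hrp hrm
      -- build the unit matrices
      set Pm : Matrix (Fin n) (Fin n) ℂ := LinearMap.toMatrix' (P : (Fin n → ℂ) →ₗ[ℂ] Fin n → ℂ)
      set Pminv : Matrix (Fin n) (Fin n) ℂ :=
        LinearMap.toMatrix' (P.symm : (Fin n → ℂ) →ₗ[ℂ] Fin n → ℂ)
      set Qm : Matrix (Fin m) (Fin m) ℂ := LinearMap.toMatrix' (Q : (Fin m → ℂ) →ₗ[ℂ] Fin m → ℂ)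
      set Qminv : Matrix (Fin m) (Fin m) ℂ :=
        LinearMap.toMatrix' (Q.symm : (Fin m → ℂ) →ₗ[ℂ] Fin m → ℂ)
      have hP1 : Pm * Pminv = 1 := by
        rw [← LinearMap.toMatrix'_comp, ← LinearMap.toMatrix'_id (R := ℂ) (n := Fin n)]
        congr 1
        ext u : 1
        simp
      have hP2 : Pminv * Pm = 1 := by
        rw [← LinearMap.toMatrix'_comp, ← LinearMap.toMatrix'_id (R := ℂ) (n := Fin n)]
        congr 1
        ext u : 1
        simp
      have hQ1 : Qm * Qminv = 1 := by
        rw [← LinearMap.toMatrix'_comp, ← LinearMap.toMatrix'_id (R := ℂ) (n := Fin m)]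
        congr 1
        ext u : 1
        simp
      have hQ2 : Qminv * Qm = 1 := by
        rw [← LinearMap.toMatrix'_comp, ← LinearMap.toMatrix'_id (R := ℂ) (n := Fin m)]
        congr 1
        ext u : 1
        simp
      refine ⟨⟨Qm, Qminv, hQ1, hQ2⟩, ⟨Pm, Pminv, hP1, hP2⟩, ?_, ?_⟩
      · -- yp = Qm * xp * Pminv
        have key : yp.mulVecLin ∘ₗ (P : (Fin n → ℂ) →ₗ[ℂ] Fin n → ℂ) =
            (Q : (Fin m → ℂ) →ₗ[ℂ] Fin m → ℂ) ∘ₗ xp.mulVecLin := by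
          apply LinearMap.ext
          intro u
          exact hP u
        have := congrArg LinearMap.toMatrix' key
        rw [LinearMap.toMatrix'_comp, LinearMap.toMatrix'_comp] at this
        rw [← Matrix.toLin'_apply' xp, ← Matrix.toLin'_apply' yp,
          LinearMap.toMatrix'_toLin', LinearMap.toMatrix'_toLin'] at this
        show yp = Qm * xp * Pminv
        calc yp = yp * (Pm * Pminv) := by rw [hP1, Matrix.mul_one]
        _ = (yp * Pm) * Pminv := by rw [Matrix.mul_assoc]
        _ = (Qm * xp) * Pminv := by rw [this]
      · -- ym = Pm * xm * Qminv
        have key : ym.mulVecLin ∘ₗ (Q : (Fin m → ℂ) →ₗ[ℂ] Fin m → ℂ) =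
            (P : (Fin n → ℂ) →ₗ[ℂ] Fin n → ℂ) ∘ₗ xm.mulVecLin := by
          apply LinearMap.ext
          intro u
          exact hQ u
        have := congrArg LinearMap.toMatrix' key
        rw [LinearMap.toMatrix'_comp, LinearMap.toMatrix'_comp] at this
        rw [← Matrix.toLin'_apply' xm, ← Matrix.toLin'_apply' ym,
          LinearMap.toMatrix'_toLin', LinearMap.toMatrix'_toLin'] at this
        show ym = Pm * xm * Qminv
        calc ym = ym * (Qm * Qminv) := by rw [hQ1, Matrix.mul_one]
        _ = (ym * Qm) * Qminv := by rw [Matrix.mul_assoc]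
        _ = (Pm * xm) * Qminv := by rw [this]
end

section
/- With g = gl(m|n) and X = {x ∈ g₁ : [x,x] = 0} identified with pairs (x⁺ : ℂⁿ→ℂᵐ, x⁻ : ℂᵐ→ℂⁿ) with x⁺x⁻ = 0 = x⁻x⁺, the set X is the union of finitely many GL(m)×GL(n)-orbits, indexed by pairs (p,q) with p + q ≤ min(m,n), where p = rank x⁺ and q = rank x⁻. -/
open Matrix

noncomputable section GlAux

/-- A complement of the kernel is equivalent to the range, compatibly with `f`. -/
lemma glaux_exists_compl_equiv_range {M N : Type*} [AddCommGroup M] [Module ℂ M]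
    [AddCommGroup N] [Module ℂ N] (f : M →ₗ[ℂ] N) (U : Submodule ℂ M)
    (h : IsCompl (LinearMap.ker f) U) :
    ∃ e : U ≃ₗ[ℂ] LinearMap.range f, ∀ x : U, (e x : N) = f x := by
  let g : U →ₗ[ℂ] LinearMap.range f :=
    (f.domRestrict U).codRestrict (LinearMap.range f) (fun x => ⟨x, rfl⟩)
  have hg : ∀ x : U, (g x : N) = f x := fun x => rfl
  have hinj : Function.Injective g := by
    rw [← LinearMap.ker_eq_bot, LinearMap.ker_eq_bot']
    intro x hx
    have h1 : (x : M) ∈ LinearMap.ker f := by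
      have : f (x : M) = 0 := by
        have := congrArg Subtype.val hx
        simpa [hg] using this
      exact this
    have h2 := h.disjoint
    rw [Submodule.disjoint_def] at h2
    exact Subtype.ext (h2 x h1 x.2)
  have hsurj : Function.Surjective g := by
    rintro ⟨y, w, rfl⟩
    have hw : w ∈ (LinearMap.ker f) ⊔ U := by rw [h.sup_eq_top]; trivial
    obtain ⟨a, ha, b, hb, rfl⟩ := Submodule.mem_sup.mp hw
    refine ⟨⟨b, hb⟩, ?_⟩
    apply Subtype.ext
    have ha' : f a = 0 := ha
    simp [hg, ha']
  exact ⟨LinearEquiv.ofBijective g ⟨hinj, hsurj⟩, fun x => rfl⟩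

end GlAux

noncomputable section GlAux2

def glauxStdP (m n p : ℕ) : Matrix (Fin m) (Fin n) ℂ :=
  Matrix.of fun i j => if (i : ℕ) = (j : ℕ) ∧ (i : ℕ) < p then 1 else 0

def glauxStdM (m n p q : ℕ) : Matrix (Fin n) (Fin m) ℂ :=
  Matrix.of fun i j => if (i : ℕ) = (j : ℕ) ∧ p ≤ (i : ℕ) ∧ (i : ℕ) < p + q then 1 else 0


set_option maxHeartbeats 1000000 in
set_option synthInstance.maxHeartbeats 200000 in
lemma glaux_key (m n : ℕ) (xp : Matrix (Fin m) (Fin n) ℂ) (xm : Matrix (Fin n) (Fin m) ℂ)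
    (hx1 : xp * xm = 0) (hx2 : xm * xp = 0) :
    ∃ (g : (Matrix (Fin m) (Fin m) ℂ)ˣ) (h : (Matrix (Fin n) (Fin n) ℂ)ˣ),
      (g : Matrix (Fin m) (Fin m) ℂ) * xp * ((h⁻¹ : _) : Matrix (Fin n) (Fin n) ℂ)
        = glauxStdP m n xp.rank ∧
      (h : Matrix (Fin n) (Fin n) ℂ) * xm * ((g⁻¹ : _) : Matrix (Fin m) (Fin m) ℂ)
        = glauxStdM m n xp.rank xm.rank := by
  classical
  set p := xp.rank with hp
  set q := xm.rank with hq
  set f := xp.mulVecLin with hf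
  set gm := xm.mulVecLin with hgm
  have hgf : gm ∘ₗ f = 0 := by rw [hf, hgm, ← Matrix.mulVecLin_mul, hx2, Matrix.mulVecLin_zero]
  have hfg : f ∘ₗ gm = 0 := by rw [hf, hgm, ← Matrix.mulVecLin_mul, hx1, Matrix.mulVecLin_zero]
  have hFK : LinearMap.range f ≤ LinearMap.ker gm := LinearMap.range_le_ker_iff.mpr hgf
  have hGK : LinearMap.range gm ≤ LinearMap.ker f := LinearMap.range_le_ker_iff.mpr hfg
  have hpf : Module.finrank ℂ (LinearMap.range f) = p := rfl
  have hqg : Module.finrank ℂ (LinearMap.range gm) = q := rfl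
  let bF : Module.Basis (Fin p) ℂ (LinearMap.range f) := Module.finBasisOfFinrankEq ℂ _ hpf
  let bG : Module.Basis (Fin q) ℂ (LinearMap.range gm) := Module.finBasisOfFinrankEq ℂ _ hqg
  obtain ⟨UW, hUW⟩ := Submodule.exists_isCompl (LinearMap.ker f)
  obtain ⟨UV, hUV⟩ := Submodule.exists_isCompl (LinearMap.ker gm)
  obtain ⟨eUW, heUW⟩ := glaux_exists_compl_equiv_range f UW hUW
  obtain ⟨eUV, heUV⟩ := glaux_exists_compl_equiv_range gm UV hUV
  set F' := (LinearMap.range f).comap (LinearMap.ker gm).subtype with hF'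
  set G' := (LinearMap.range gm).comap (LinearMap.ker f).subtype with hG'
  obtain ⟨C', hC'⟩ := Submodule.exists_isCompl F'
  obtain ⟨D', hD'⟩ := Submodule.exists_isCompl G'
  set rV := Module.finrank ℂ C' with hrV
  set rW := Module.finrank ℂ D' with hrW
  haveI : Module.Free ℂ C' := Module.Free.of_basis (Module.Basis.ofVectorSpace ℂ C')
  haveI : Module.Free ℂ D' := Module.Free.of_basis (Module.Basis.ofVectorSpace ℂ D')
  let bC : Module.Basis (Fin rV) ℂ C' := Module.finBasisOfFinrankEq ℂ _ rfl
  let bD : Module.Basis (Fin rW) ℂ D' := Module.finBasisOfFinrankEq ℂ _ rfl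
  let eF : F' ≃ₗ[ℂ] LinearMap.range f := Submodule.comapSubtypeEquivOfLe hFK
  let eG : G' ≃ₗ[ℂ] LinearMap.range gm := Submodule.comapSubtypeEquivOfLe hGK
  -- dimension bookkeeping
  have hdV : p + (q + rV) = m := by
    have h1 := Submodule.finrank_add_eq_of_isCompl hUV
    have h2 := Submodule.finrank_add_eq_of_isCompl hC'
    have h3 : Module.finrank ℂ UV = q := by rw [eUV.finrank_eq, hqg]
    have h4 : Module.finrank ℂ F' = p := by rw [eF.finrank_eq, hpf]
    have h5 : Module.finrank ℂ (Fin m → ℂ) = m := by simp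
    omega
  have hdW : p + (q + rW) = n := by
    have h1 := Submodule.finrank_add_eq_of_isCompl hUW
    have h2 := Submodule.finrank_add_eq_of_isCompl hD'
    have h3 : Module.finrank ℂ UW = p := by rw [eUW.finrank_eq, hpf]
    have h4 : Module.finrank ℂ G' = q := by rw [eG.finrank_eq, hqg]
    have h5 : Module.finrank ℂ (Fin n → ℂ) = n := by simp
    omega
  -- assembled bases
  let e1V : (LinearMap.ker gm × UV) ≃ₗ[ℂ] (Fin m → ℂ) := Submodule.prodEquivOfIsCompl _ _ hUV
  let e2V : (F' × C') ≃ₗ[ℂ] LinearMap.ker gm := Submodule.prodEquivOfIsCompl _ _ hC'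
  let e1W : (LinearMap.ker f × UW) ≃ₗ[ℂ] (Fin n → ℂ) := Submodule.prodEquivOfIsCompl _ _ hUW
  let e2W : (G' × D') ≃ₗ[ℂ] LinearMap.ker f := Submodule.prodEquivOfIsCompl _ _ hD'
  let BV : Module.Basis ((Fin p ⊕ Fin rV) ⊕ Fin q) ℂ (Fin m → ℂ) :=
    ((((bF.map eF.symm).prod bC).map e2V).prod (bG.map eUV.symm)).map e1V
  let BW : Module.Basis ((Fin q ⊕ Fin rW) ⊕ Fin p) ℂ (Fin n → ℂ) :=
    ((((bG.map eG.symm).prod bD).map e2W).prod (bF.map eUW.symm)).map e1W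
  -- values of the bases
  have hBV1 : ∀ i, BV (Sum.inl (Sum.inl i)) = ((bF i : Fin m → ℂ)) := by
    intro i
    simp only [BV, Module.Basis.map_apply, Module.Basis.prod_apply, e1V, e2V, Sum.elim_inl, Sum.elim_inr,
      Function.comp_apply, LinearMap.inl_apply, LinearMap.inr_apply, map_zero,
      Submodule.coe_prodEquivOfIsCompl', Submodule.coe_zero, add_zero, zero_add]
    conv_rhs => rw [← LinearEquiv.apply_symm_apply eF (bF i)]
    rw [Submodule.comapSubtypeEquivOfLe_apply_coe]
  have hBV2 : ∀ j, BV (Sum.inr j) = ((eUV.symm (bG j) : UV) : Fin m → ℂ) := by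
    intro j
    simp only [BV, Module.Basis.map_apply, Module.Basis.prod_apply, e1V, Sum.elim_inr,
      Function.comp_apply, LinearMap.inr_apply, map_zero,
      Submodule.coe_prodEquivOfIsCompl', Submodule.coe_zero, add_zero, zero_add]
  have hBVker : ∀ z, BV (Sum.inl z) ∈ LinearMap.ker gm := by
    intro z
    have : BV (Sum.inl z)
        = ((e2V (((bF.map eF.symm).prod bC) z) : LinearMap.ker gm) : (Fin m → ℂ)) := by
      simp only [BV, Module.Basis.map_apply, Module.Basis.prod_apply, e1V, Sum.elim_inl,
        Function.comp_apply, LinearMap.inl_apply, map_zero,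
        Submodule.coe_prodEquivOfIsCompl', Submodule.coe_zero, add_zero, zero_add]
    rw [this]
    exact Submodule.coe_mem _
  have hBW1 : ∀ j, BW (Sum.inl (Sum.inl j)) = ((bG j : Fin n → ℂ)) := by
    intro j
    simp only [BW, Module.Basis.map_apply, Module.Basis.prod_apply, e1W, e2W, Sum.elim_inl, Sum.elim_inr,
      Function.comp_apply, LinearMap.inl_apply, LinearMap.inr_apply, map_zero,
      Submodule.coe_prodEquivOfIsCompl', Submodule.coe_zero, add_zero, zero_add]
    conv_rhs => rw [← LinearEquiv.apply_symm_apply eG (bG j)]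
    rw [Submodule.comapSubtypeEquivOfLe_apply_coe]
  have hBW2 : ∀ i, BW (Sum.inr i) = ((eUW.symm (bF i) : UW) : Fin n → ℂ) := by
    intro i
    simp only [BW, Module.Basis.map_apply, Module.Basis.prod_apply, e1W, Sum.elim_inr,
      Function.comp_apply, LinearMap.inr_apply, map_zero,
      Submodule.coe_prodEquivOfIsCompl', Submodule.coe_zero, add_zero, zero_add]
  have hBWker : ∀ z, BW (Sum.inl z) ∈ LinearMap.ker f := by
    intro z
    have : BW (Sum.inl z)
        = ((e2W (((bG.map eG.symm).prod bD) z) : LinearMap.ker f) : (Fin n → ℂ)) := by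
      simp only [BW, Module.Basis.map_apply, Module.Basis.prod_apply, e1W, Sum.elim_inl,
        Function.comp_apply, LinearMap.inl_apply, map_zero,
        Submodule.coe_prodEquivOfIsCompl', Submodule.coe_zero, add_zero, zero_add]
    rw [this]
    exact Submodule.coe_mem _
  -- images under f and gm
  have hfBW1 : ∀ i, f (BW (Sum.inr i)) = BV (Sum.inl (Sum.inl i)) := by
    intro i
    rw [hBW2, hBV1, ← heUW, LinearEquiv.apply_symm_apply]
  have hfBW0 : ∀ z, f (BW (Sum.inl z)) = 0 := fun z => hBWker z
  have hgBV2 : ∀ j, gm (BV (Sum.inr j)) = BW (Sum.inl (Sum.inl j)) := by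
    intro j
    rw [hBV2, hBW1, ← heUV, LinearEquiv.apply_symm_apply]
  have hgBV0 : ∀ z, gm (BV (Sum.inl z)) = 0 := fun z => hBVker z
  -- index equivalences
  let σV : ((Fin p ⊕ Fin rV) ⊕ Fin q) ≃ Fin m :=
    ((Equiv.sumAssoc (Fin p) (Fin rV) (Fin q)).trans
        ((Equiv.refl (Fin p)).sumCongr (Equiv.sumComm (Fin rV) (Fin q)))).trans
      (((Equiv.refl (Fin p)).sumCongr finSumFinEquiv).trans
        (finSumFinEquiv.trans (finCongr hdV)))
  let σW : ((Fin q ⊕ Fin rW) ⊕ Fin p) ≃ Fin n :=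
    (Equiv.sumComm _ _).trans
      (((Equiv.refl (Fin p)).sumCongr finSumFinEquiv).trans
        (finSumFinEquiv.trans (finCongr hdW)))
  have hσV1 : ∀ i : Fin p, ((σV (Sum.inl (Sum.inl i)) : Fin m) : ℕ) = (i : ℕ) := by
    intro i; simp [σV]
  have hσV2 : ∀ j : Fin q, ((σV (Sum.inr j) : Fin m) : ℕ) = p + (j : ℕ) := by
    intro j; simp [σV]
  have hσV3 : ∀ k : Fin rV, ((σV (Sum.inl (Sum.inr k)) : Fin m) : ℕ) = p + (q + (k : ℕ)) := by
    intro k; simp [σV]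
  have hσW1 : ∀ i : Fin p, ((σW (Sum.inr i) : Fin n) : ℕ) = (i : ℕ) := by
    intro i; simp [σW]
  have hσW2 : ∀ j : Fin q, ((σW (Sum.inl (Sum.inl j)) : Fin n) : ℕ) = p + (j : ℕ) := by
    intro j; simp [σW]
  have hσW3 : ∀ k : Fin rW, ((σW (Sum.inl (Sum.inr k)) : Fin n) : ℕ) = p + (q + (k : ℕ)) := by
    intro k; simp [σW]
  -- reindexed bases and change-of-basis matrices
  let BVf := BV.reindex σV
  let BWf := BW.reindex σW
  let sbV := Pi.basisFun ℂ (Fin m)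
  let sbW := Pi.basisFun ℂ (Fin n)
  let G : Matrix (Fin m) (Fin m) ℂ := LinearMap.toMatrix sbV BVf LinearMap.id
  let Gi : Matrix (Fin m) (Fin m) ℂ := LinearMap.toMatrix BVf sbV LinearMap.id
  let H : Matrix (Fin n) (Fin n) ℂ := LinearMap.toMatrix sbW BWf LinearMap.id
  let Hi : Matrix (Fin n) (Fin n) ℂ := LinearMap.toMatrix BWf sbW LinearMap.id
  have hGGi : G * Gi = 1 := by
    rw [show G * Gi = LinearMap.toMatrix BVf BVf (LinearMap.id ∘ₗ LinearMap.id) from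
      (LinearMap.toMatrix_comp BVf sbV BVf _ _).symm]
    simp
  have hGiG : Gi * G = 1 := by
    rw [show Gi * G = LinearMap.toMatrix sbV sbV (LinearMap.id ∘ₗ LinearMap.id) from
      (LinearMap.toMatrix_comp sbV BVf sbV _ _).symm]
    simp
  have hHHi : H * Hi = 1 := by
    rw [show H * Hi = LinearMap.toMatrix BWf BWf (LinearMap.id ∘ₗ LinearMap.id) from
      (LinearMap.toMatrix_comp BWf sbW BWf _ _).symm]
    simp
  have hHiH : Hi * H = 1 := by
    rw [show Hi * H = LinearMap.toMatrix sbW sbW (LinearMap.id ∘ₗ LinearMap.id) from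
      (LinearMap.toMatrix_comp sbW BWf sbW _ _).symm]
    simp
  have hxp : LinearMap.toMatrix sbW sbV f = xp := LinearMap.toMatrix_toLin sbW sbV xp
  have hxm : LinearMap.toMatrix sbV sbW gm = xm := LinearMap.toMatrix_toLin sbV sbW xm
  have key1 : LinearMap.toMatrix BWf BVf f = G * xp * Hi := by
    conv_lhs => rw [show f = (LinearMap.id ∘ₗ f) ∘ₗ LinearMap.id by simp]
    rw [LinearMap.toMatrix_comp BWf sbW BVf, LinearMap.toMatrix_comp sbW sbV BVf, hxp]
  have key2 : LinearMap.toMatrix BVf BWf gm = H * xm * Gi := by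
    conv_lhs => rw [show gm = (LinearMap.id ∘ₗ gm) ∘ₗ LinearMap.id by simp]
    rw [LinearMap.toMatrix_comp BVf sbV BWf, LinearMap.toMatrix_comp sbV sbW BWf, hxm]
  have main1 : LinearMap.toMatrix BWf BVf f = glauxStdP m n p := by
    ext a b
    obtain ⟨x, rfl⟩ := σV.surjective a
    obtain ⟨y, rfl⟩ := σW.surjective b
    rw [LinearMap.toMatrix_apply, Module.Basis.reindex_apply, Module.Basis.repr_reindex_apply,
      Equiv.symm_apply_apply, Equiv.symm_apply_apply]
    rcases y with (z | i)
    · rw [hfBW0, map_zero]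
      simp only [Finsupp.coe_zero, Pi.zero_apply, glauxStdP, Matrix.of_apply]
      rw [eq_comm, if_neg]
      rintro ⟨h1, h2⟩
      rcases z with (j | k)
      · rw [hσW2 j] at h1; omega
      · rw [hσW3 k] at h1; omega
    · rw [hfBW1, Module.Basis.repr_self]
      have hiq := i.isLt
      rcases x with ((i' | k) | j)
      · rcases eq_or_ne i i' with rfl | hne
        · simp [Finsupp.single_apply, glauxStdP, hσV1, hσW1]
        · have hne' : (i' : ℕ) ≠ (i : ℕ) := fun hc => hne (Fin.ext hc.symm)
          simp [Finsupp.single_apply, glauxStdP, hσV1, hσW1, hne, hne']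
      · have hk : (p : ℕ) + (q + (k : ℕ)) ≠ (i : ℕ) := by omega
        simp [Finsupp.single_apply, glauxStdP, hσV3, hσW1, hk]
      · have hj : (p : ℕ) + (j : ℕ) ≠ (i : ℕ) := by omega
        simp [Finsupp.single_apply, glauxStdP, hσV2, hσW1, hj]
  have main2 : LinearMap.toMatrix BVf BWf gm = glauxStdM m n p q := by
    ext a b
    obtain ⟨y, rfl⟩ := σW.surjective a
    obtain ⟨x, rfl⟩ := σV.surjective b
    rw [LinearMap.toMatrix_apply, Module.Basis.reindex_apply, Module.Basis.repr_reindex_apply,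
      Equiv.symm_apply_apply, Equiv.symm_apply_apply]
    rcases x with (z | j)
    · rw [hgBV0, map_zero]
      simp only [Finsupp.coe_zero, Pi.zero_apply, glauxStdM, Matrix.of_apply]
      rw [eq_comm, if_neg]
      rintro ⟨h1, h2, h3⟩
      rcases z with (i | k)
      · rw [hσV1 i] at h1; have := i.isLt; omega
      · rw [hσV3 k] at h1; omega
    · rw [hgBV2, Module.Basis.repr_self]
      have hjq := j.isLt
      rcases y with ((j' | k) | i)
      · have h2 := j'.isLt
        rcases eq_or_ne j j' with rfl | hne
        · have hcond : (p : ℕ) + (j : ℕ) = p + (j : ℕ) ∧ p ≤ p + (j : ℕ) ∧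
              p + (j : ℕ) < p + q := ⟨rfl, by omega, by omega⟩
          simp [Finsupp.single_apply, glauxStdM, hσW2, hσV2, hcond]
        · have hne' : ¬((p : ℕ) + (j' : ℕ) = p + (j : ℕ) ∧ p ≤ p + (j' : ℕ) ∧
              p + (j' : ℕ) < p + q) := by
            rintro ⟨h1, -, -⟩; exact hne (Fin.ext (by omega)).symm
          simp only [Finsupp.single_apply, glauxStdM, Matrix.of_apply, hσW2, hσV2]
          rw [if_neg hne', if_neg (by simp [hne])]
      · have hk : ¬((p : ℕ) + (q + (k : ℕ)) = p + (j : ℕ) ∧ p ≤ p + (q + (k : ℕ)) ∧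
            p + (q + (k : ℕ)) < p + q) := by rintro ⟨-, -, h3⟩; omega
        simp [Finsupp.single_apply, glauxStdM, hσW3, hσV2, hk]
      · have hi := i.isLt
        have hk : ¬(((i : ℕ)) = p + (j : ℕ) ∧ p ≤ (i : ℕ) ∧ (i : ℕ) < p + q) := by
          rintro ⟨-, h2, -⟩; omega
        simp [Finsupp.single_apply, glauxStdM, hσW1, hσV2, hk]
  refine ⟨⟨G, Gi, hGGi, hGiG⟩, ⟨H, Hi, hHHi, hHiH⟩, ?_, ?_⟩
  · show G * xp * Hi = _
    rw [← key1]; exact main1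
  · show H * xm * Gi = _
    rw [← key2]; exact main2

end GlAux2


/-- For `g = gl(m|n)`, the cone `X = {x ∈ g₁ : [x,x] = 0}`, identified with
pairs `(x⁺, x⁻)` with `x⁺x⁻ = 0 = x⁻x⁺`, is a finite union of `GL(m) × GL(n)`-orbits
indexed by the pairs `(p,q) = (rank x⁺, rank x⁻)` with `p + q ≤ min m n`: every `x ∈ X`
satisfies `rank x⁺ + rank x⁻ ≤ min m n`, and two elements of `X` lie in the same orbit
iff they have the same pair of ranks. -/
theorem gl_mn_cone_orbits_indexed_by_ranks (m n : ℕ)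
    (xp : Matrix (Fin m) (Fin n) ℂ) (xm : Matrix (Fin n) (Fin m) ℂ)
    (hx1 : xp * xm = 0) (hx2 : xm * xp = 0) :
    xp.rank + xm.rank ≤ min m n ∧
    ∀ (yp : Matrix (Fin m) (Fin n) ℂ) (ym : Matrix (Fin n) (Fin m) ℂ),
      yp * ym = 0 → ym * yp = 0 →
      ((∃ (g : (Matrix (Fin m) (Fin m) ℂ)ˣ) (h : (Matrix (Fin n) (Fin n) ℂ)ˣ),
          yp = (g : Matrix (Fin m) (Fin m) ℂ) * xp * ((h⁻¹ : _) : Matrix (Fin n) (Fin n) ℂ) ∧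
          ym = (h : Matrix (Fin n) (Fin n) ℂ) * xm * ((g⁻¹ : _) : Matrix (Fin m) (Fin m) ℂ)) ↔
        (xp.rank = yp.rank ∧ xm.rank = ym.rank)) := by
  constructor
  · have h1 := Matrix.rank_add_rank_le_card_of_mul_eq_zero hx1
    have h2 := Matrix.rank_add_rank_le_card_of_mul_eq_zero hx2
    simp only [Fintype.card_fin] at h1 h2
    omega
  · intro yp ym hy1 hy2
    constructor
    · rintro ⟨g, h, rfl, rfl⟩
      have hgdet : IsUnit ((g : Matrix (Fin m) (Fin m) ℂ)).det :=
        (Matrix.isUnit_iff_isUnit_det _).mp g.isUnit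
      have hgidet : IsUnit ((↑g⁻¹ : Matrix (Fin m) (Fin m) ℂ)).det :=
        (Matrix.isUnit_iff_isUnit_det _).mp (g⁻¹).isUnit
      have hhdet : IsUnit ((h : Matrix (Fin n) (Fin n) ℂ)).det :=
        (Matrix.isUnit_iff_isUnit_det _).mp h.isUnit
      have hhidet : IsUnit ((↑h⁻¹ : Matrix (Fin n) (Fin n) ℂ)).det :=
        (Matrix.isUnit_iff_isUnit_det _).mp (h⁻¹).isUnit
      constructor
      · rw [Matrix.rank_mul_eq_left_of_isUnit_det _ _ hhidet,
          Matrix.rank_mul_eq_right_of_isUnit_det _ _ hgdet]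
      · rw [Matrix.rank_mul_eq_left_of_isUnit_det _ _ hgidet,
          Matrix.rank_mul_eq_right_of_isUnit_det _ _ hhdet]
    · rintro ⟨hr1, hr2⟩
      obtain ⟨g1, h1, e1, e2⟩ := glaux_key m n xp xm hx1 hx2
      obtain ⟨g2, h2, e3, e4⟩ := glaux_key m n yp ym hy1 hy2
      rw [← hr1] at e3
      rw [← hr1, ← hr2] at e4
      refine ⟨g2⁻¹ * g1, h2⁻¹ * h1, ?_, ?_⟩
      · have hc : ((h2⁻¹ * h1)⁻¹ : (Matrix (Fin n) (Fin n) ℂ)ˣ) = h1⁻¹ * h2 := by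
          rw [_root_.mul_inv_rev, inv_inv]
        rw [hc, Units.val_mul, Units.val_mul]
        have hyp : yp = ((g2⁻¹ : (Matrix (Fin m) (Fin m) ℂ)ˣ) : Matrix (Fin m) (Fin m) ℂ)
            * ((g2 : Matrix (Fin m) (Fin m) ℂ) * yp
              * ((h2⁻¹ : (Matrix (Fin n) (Fin n) ℂ)ˣ) : Matrix (Fin n) (Fin n) ℂ))
            * (h2 : Matrix (Fin n) (Fin n) ℂ) := by
          simp only [Matrix.mul_assoc]
          rw [← Units.val_mul, inv_mul_cancel, Units.val_one, Matrix.mul_one,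
            ← Matrix.mul_assoc, ← Units.val_mul, inv_mul_cancel, Units.val_one,
            Matrix.one_mul]
        rw [hyp, e3, ← e1]
        simp only [Matrix.mul_assoc]
      · have hc : ((g2⁻¹ * g1)⁻¹ : (Matrix (Fin m) (Fin m) ℂ)ˣ) = g1⁻¹ * g2 := by
          rw [_root_.mul_inv_rev, inv_inv]
        rw [hc, Units.val_mul, Units.val_mul]
        have hym : ym = ((h2⁻¹ : (Matrix (Fin n) (Fin n) ℂ)ˣ) : Matrix (Fin n) (Fin n) ℂ)
            * ((h2 : Matrix (Fin n) (Fin n) ℂ) * ym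
              * ((g2⁻¹ : (Matrix (Fin m) (Fin m) ℂ)ˣ) : Matrix (Fin m) (Fin m) ℂ))
            * (g2 : Matrix (Fin m) (Fin m) ℂ) := by
          simp only [Matrix.mul_assoc]
          rw [← Units.val_mul, inv_mul_cancel, Units.val_one, Matrix.mul_one,
            ← Matrix.mul_assoc, ← Units.val_mul, inv_mul_cancel, Units.val_one,
            Matrix.one_mul]
        rw [hym, e4, ← e2]
        simp only [Matrix.mul_assoc]
end
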